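/- Let P and Q be orthogonal projections on a finite-dimensional Hilbert space with ‖(1 − Q)P‖ < 1. Then tr P ≤ tr Q (equivalently, rank P ≤ rank Q). -/

import Mathlib

lemma isProj_of_idem {E : Type} [NormedAddCommGroup E] [InnerProductSpace ℂ E]
    (P : E →L[ℂ] E) (hP : IsIdempotentElem P) :
    LinearMap.IsProj (LinearMap.range (P : E →ₗ[ℂ] E)) (P : E →ₗ[ℂ] E) := by
  constructor
  · intro x; exact ⟨x, rfl⟩
  · rintro x ⟨y, rfl⟩
    have := congrArg (fun (T : E →L[ℂ] E) => T y) hP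
    simpa using this

lemma trace_idem_eq {E : Type} [NormedAddCommGroup E] [InnerProductSpace ℂ E]
    [FiniteDimensional ℂ E] (P : E →L[ℂ] E) (hP : IsIdempotentElem P) :
    LinearMap.trace ℂ E (P : E →ₗ[ℂ] E)
      = (Module.finrank ℂ (LinearMap.range (P : E →ₗ[ℂ] E)) : ℂ) :=
  (isProj_of_idem P hP).trace

/-- If `P, Q` are orthogonal projections on a finite-dimensional Hilbert space with
`‖(1 - Q)P‖ < 1`, then `tr P ≤ tr Q` (equivalently `rank P ≤ rank Q`). -/
theorem projection_trace_comparison (E : Type) [NormedAddCommGroup E]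
    [InnerProductSpace ℂ E] [FiniteDimensional ℂ E]
    (P Q : E →L[ℂ] E)
    (hP1 : IsIdempotentElem P) (hP2 : IsSelfAdjoint P)
    (hQ1 : IsIdempotentElem Q) (hQ2 : IsSelfAdjoint Q)
    (h : ‖(1 - Q) * P‖ < 1) :
    (LinearMap.trace ℂ E (P : E →ₗ[ℂ] E)).re ≤ (LinearMap.trace ℂ E (Q : E →ₗ[ℂ] E)).re ∧
      Module.finrank ℂ (LinearMap.range (P : E →ₗ[ℂ] E)) ≤
        Module.finrank ℂ (LinearMap.range (Q : E →ₗ[ℂ] E)) := by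
  have hrank : Module.finrank ℂ (LinearMap.range (P : E →ₗ[ℂ] E)) ≤
      Module.finrank ℂ (LinearMap.range (Q : E →ₗ[ℂ] E)) := by
    set f : (LinearMap.range (P : E →ₗ[ℂ] E)) →ₗ[ℂ] E :=
      (Q : E →ₗ[ℂ] E) ∘ₗ (LinearMap.range (P : E →ₗ[ℂ] E)).subtype with hf
    have hinj : Function.Injective f := by
      rw [← LinearMap.ker_eq_bot]
      rw [LinearMap.ker_eq_bot']
      rintro ⟨x, y, rfl⟩ hx
      have hx' : Q (P y) = 0 := by
        simpa [f] using hx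
      have hPP : P (P y) = P y := by
        have := congrArg (fun (T : E →L[ℂ] E) => T y) hP1
        simpa using this
      have hnorm : ‖P y‖ ≤ ‖(1 - Q) * P‖ * ‖P y‖ := by
        have : ((1 - Q) * P) (P y) = P y := by
          simp [ContinuousLinearMap.mul_apply, hPP, hx']
        calc ‖P y‖ = ‖((1 - Q) * P) (P y)‖ := by rw [this]
          _ ≤ ‖(1 - Q) * P‖ * ‖P y‖ := ((1 - Q) * P).le_opNorm _
      have : P y = 0 := by
        by_contra hne
        have hpos : 0 < ‖P y‖ := norm_pos_iff.mpr hne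
        nlinarith
      exact Subtype.ext this
    have hle : LinearMap.range f ≤ LinearMap.range (Q : E →ₗ[ℂ] E) := by
      rintro _ ⟨x, rfl⟩
      exact ⟨x, rfl⟩
    calc Module.finrank ℂ (LinearMap.range (P : E →ₗ[ℂ] E))
        = Module.finrank ℂ (LinearMap.range f) :=
          (LinearMap.finrank_range_of_inj hinj).symm
      _ ≤ Module.finrank ℂ (LinearMap.range (Q : E →ₗ[ℂ] E)) :=
          Submodule.finrank_mono hle
  refine ⟨?_, hrank⟩
  rw [trace_idem_eq P hP1, trace_idem_eq Q hQ1]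
  simpa using (Nat.cast_le (α := ℝ)).mpr hrank
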